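/- Let 𝔎 be a field and W a finite Coxeter group with Kazhdan–Lusztig basis elements C_w = Σ_{y ≤ w} (−1)^{ℓ(w)−ℓ(y)} p_{y,w}(1) y ∈ 𝔎W. For any K ⊆ S, the elements x C_{w_K} with x ∈ X_K (minimal-length left coset representatives of W_K) form a 𝔎-basis of the left ideal 𝔎W C_{w_K}. -/

import Mathlib

namespace KLaux

open List CoxeterSystem

variable {B W : Type*} [Group W] [DecidableEq W] {M : CoxeterMatrix B} (cs : CoxeterSystem M W)

local prefix:100 "s" => cs.simple
local prefix:100 "π" => cs.wordProd
local prefix:100 "ℓ" => cs.length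
local prefix:100 "ris" => cs.rightInvSeq

/-- The sign action of a generator on `W × ℤˣ`. -/
def mu (i : B) : Function.End (W × ℤˣ) :=
  fun p => (s i * p.1 * s i, if p.1 = s i then -p.2 else p.2)

lemma prod_map_mu (ω : List B) (p : W × ℤˣ) :
    ((ω.map (mu cs)).prod : Function.End (W × ℤˣ)) p =
      (π ω * p.1 * (π ω)⁻¹, (-1 : ℤˣ) ^ (List.count p.1 (ris ω)) * p.2) := by
  induction ω generalizing p with
  | nil =>
    simp only [List.map_nil, List.prod_nil, CoxeterSystem.rightInvSeq, List.count_nil, pow_zero,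
      one_mul, CoxeterSystem.wordProd_nil]
    show p = _
    simp
  | cons i ω ih =>
    rw [List.map_cons, List.prod_cons]
    show mu cs i ((map (mu cs) ω).prod p) = _
    rw [ih]
    show mu cs i _ = _
    rw [mu]
    have hcond : (π ω * p.1 * (π ω)⁻¹ = s i) ↔ (p.1 = (π ω)⁻¹ * s i * π ω) := by
      constructor
      · intro h; rw [← h]; group
      · intro h; rw [h]; group
    have hcount : List.count p.1 (ris (i :: ω)) =
        List.count p.1 (ris ω) + if p.1 = (π ω)⁻¹ * s i * π ω then 1 else 0 := by
      show List.count p.1 (((π ω)⁻¹ * s i * π ω) :: ris ω) = _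
      rw [List.count_cons]
      by_cases h : p.1 = (π ω)⁻¹ * s i * π ω
      · rw [if_pos h, if_pos (beq_iff_eq.mpr h.symm)]
      · rw [if_neg h, if_neg (by simpa [beq_iff_eq] using fun hh => h hh.symm)]
    refine Prod.ext ?_ ?_
    · show s i * (π ω * p.1 * (π ω)⁻¹) * s i = _
      rw [CoxeterSystem.wordProd_cons]
      rw [mul_inv_rev, cs.inv_simple]
      group
    · show (if π ω * p.1 * (π ω)⁻¹ = s i then -((-1 : ℤˣ) ^ (List.count p.1 (ris ω)) * p.2)
          else (-1 : ℤˣ) ^ (List.count p.1 (ris ω)) * p.2) = _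
      rw [hcount]
      by_cases h : p.1 = (π ω)⁻¹ * s i * π ω
      · rw [if_pos (hcond.mpr h), if_pos h, pow_add, pow_one]
        rw [mul_neg_one, neg_mul]
      · rw [if_neg (fun hh => h (hcond.mp hh)), if_neg h, add_zero]

end KLaux

namespace KLaux

variable {B W : Type*} [Group W] [DecidableEq W] {M : CoxeterMatrix B} (cs : CoxeterSystem M W)

local prefix:100 "s" => cs.simple
local prefix:100 "π" => cs.wordProd
local prefix:100 "ℓ" => cs.length
local prefix:100 "ris" => cs.rightInvSeq

lemma simple_mul_pow_comm (i i' : B) (c : ℕ) :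
    s i' * (s i * s i') ^ c = ((s i * s i') ^ c)⁻¹ * s i' := by
  have erel : s i' * (s i * s i') = (s i * s i')⁻¹ * s i' := by
    rw [mul_inv_rev, cs.inv_simple, cs.inv_simple, mul_assoc]
  induction c with
  | zero => simp
  | succ n ih =>
    calc s i' * (s i * s i') ^ (n+1) = (s i' * (s i * s i') ^ n) * (s i * s i') := by
          rw [pow_succ, mul_assoc]
      _ = ((s i * s i') ^ n)⁻¹ * (s i' * (s i * s i')) := by rw [ih, mul_assoc]
      _ = ((s i * s i') ^ n)⁻¹ * ((s i * s i')⁻¹ * s i') := by rw [erel]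
      _ = ((s i * s i') ^ (n+1))⁻¹ * s i' := by
          conv_rhs => rw [pow_succ, mul_inv_rev]
          rw [← mul_assoc]
          congr 1
          exact (((Commute.refl (s i * s i')).pow_left n).inv_inv).eq

lemma vv_eq (i i' : B) (k : ℕ) :
    (π (CoxeterSystem.alternatingWord i i' k))⁻¹ * π (CoxeterSystem.alternatingWord i i' (k+1)) =
      ((s i * s i') ^ k)⁻¹ * s i' := by
  rcases Nat.even_or_odd k with ⟨a, ha⟩ | ⟨a, ha⟩
  · subst ha
    rw [cs.prod_alternatingWord_eq_mul_pow, cs.prod_alternatingWord_eq_mul_pow]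
    have h1 : Even (a + a) := ⟨a, rfl⟩
    have h2 : ¬ Even (a + a + 1) := by simp [Nat.even_add_one, h1]
    rw [if_pos h1, if_neg h2]
    have h3 : (a + a) / 2 = a := by omega
    have h4 : (a + a + 1) / 2 = a := by omega
    rw [h3, h4, one_mul]
    rw [simple_mul_pow_comm cs i i' a, ← mul_assoc, ← mul_inv_rev, ← pow_add]
  · subst ha
    rw [cs.prod_alternatingWord_eq_mul_pow, cs.prod_alternatingWord_eq_mul_pow]
    have h1 : ¬ Even (2 * a + 1) := by simp [Nat.even_add_one]
    have h2 : Even (2 * a + 1 + 1) := by refine ⟨a + 1, by ring⟩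
    rw [if_neg h1, if_pos h2]
    have h3 : (2 * a + 1) / 2 = a := by omega
    have h4 : (2 * a + 1 + 1) / 2 = a + 1 := by omega
    rw [h3, h4, one_mul]
    rw [mul_inv_rev, cs.inv_simple]
    rw [mul_assoc, simple_mul_pow_comm cs i i' (a+1), ← mul_assoc, ← mul_inv_rev, ← pow_add]
    congr 2
    ring

lemma rightInvSeq_alternatingWord (i i' : B) (n : ℕ) :
    ris (CoxeterSystem.alternatingWord i i' n) =
      (List.range n).reverse.map (fun k => ((s i * s i') ^ k)⁻¹ * s i') := by
  induction n with
  | zero => simp [CoxeterSystem.alternatingWord, CoxeterSystem.rightInvSeq]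
  | succ n ih =>
    rw [CoxeterSystem.alternatingWord_succ']
    show ((π (CoxeterSystem.alternatingWord i i' n))⁻¹ *
        s (if Even n then i' else i) * π (CoxeterSystem.alternatingWord i i' n)) :: _ = _
    rw [List.range_succ, List.reverse_append, List.reverse_singleton, List.singleton_append,
      List.map_cons, ih]
    congr 1
    have : s (if Even n then i' else i) * π (CoxeterSystem.alternatingWord i i' n) =
        π (CoxeterSystem.alternatingWord i i' (n+1)) := by
      rw [CoxeterSystem.alternatingWord_succ', CoxeterSystem.wordProd_cons]
    rw [mul_assoc, this]
    exact vv_eq cs i i' n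

end KLaux

set_option linter.unusedSectionVars false

namespace KLaux

variable {B W : Type*} [Group W] [DecidableEq W] {M : CoxeterMatrix B} (cs : CoxeterSystem M W)

local prefix:100 "s" => cs.simple
local prefix:100 "π" => cs.wordProd
local prefix:100 "ℓ" => cs.length
local prefix:100 "ris" => cs.rightInvSeq

lemma count_ris_alt_even (i i' : B) (t : W) :
    Even (List.count t (ris (CoxeterSystem.alternatingWord i i' (2 * M.M i i')))) := by
  rw [rightInvSeq_alternatingWord, List.map_reverse, List.count_reverse]
  have h2 : 2 * M.M i i' = M.M i i' + M.M i i' := by ring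
  rw [h2, List.range_add, List.map_append, List.count_append]
  have h3 : List.map (fun k => ((s i * s i') ^ k)⁻¹ * s i')
        (List.map (fun x => M.M i i' + x) (List.range (M.M i i'))) =
      List.map (fun k => ((s i * s i') ^ k)⁻¹ * s i') (List.range (M.M i i')) := by
    rw [List.map_map]
    apply List.map_congr_left
    intro k _
    simp only [Function.comp_apply]
    rw [pow_add, cs.simple_mul_simple_pow i i', one_mul]
  rw [h3]
  exact ⟨_, rfl⟩

lemma mapProd_alt (i i' : B) (m : ℕ) :
    ((CoxeterSystem.alternatingWord i i' (2 * m)).map (mu cs)).prod =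
      (mu cs i * mu cs i') ^ m := by
  induction m with
  | zero => simp [CoxeterSystem.alternatingWord]
  | succ n ih =>
    have h1 : 2 * (n + 1) = (2 * n + 1) + 1 := by ring
    rw [h1, CoxeterSystem.alternatingWord_succ', CoxeterSystem.alternatingWord_succ']
    have e1 : ¬ Even (2 * n + 1) := by simp [Nat.even_add_one]
    have e2 : Even (2 * n) := ⟨n, by ring⟩
    rw [if_neg e1, if_pos e2, List.map_cons, List.map_cons, List.prod_cons, List.prod_cons, ih,
      pow_succ', ← mul_assoc]

lemma mu_liftable : M.IsLiftable (mu cs) := by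
  intro i i'
  rw [← mapProd_alt cs i i']
  funext p
  rw [prod_map_mu]
  have h1 : π (CoxeterSystem.alternatingWord i i' (2 * M.M i i')) = 1 := by
    rw [cs.prod_alternatingWord_eq_mul_pow]
    have : Even (2 * M.M i i') := ⟨M.M i i', by ring⟩
    rw [if_pos this, one_mul]
    have h2 : 2 * M.M i i' / 2 = M.M i i' := by omega
    rw [h2, cs.simple_mul_simple_pow]
  rw [h1]
  obtain ⟨c, hc⟩ := count_ris_alt_even cs i i' p.1
  rw [hc, ← two_mul, pow_mul]
  conv_rhs => rw [show (1 : Function.End (W × ℤˣ)) p = p from rfl]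
  refine Prod.ext ?_ ?_
  · simp
  · norm_num

/-- The sign homomorphism used to prove exchange. -/
noncomputable def signH : W →* Function.End (W × ℤˣ) := cs.lift ⟨mu cs, mu_liftable cs⟩

lemma signH_wordProd (ω : List B) : signH cs (π ω) = ((ω.map (mu cs)).prod) := by
  induction ω with
  | nil => simp [CoxeterSystem.wordProd_nil]
  | cons i ω ih =>
    rw [CoxeterSystem.wordProd_cons, map_mul, ih, List.map_cons, List.prod_cons]
    congr 1
    exact cs.lift_apply_simple (mu_liftable cs) i

lemma count_parity {ω ω' : List B} (h : π ω = π ω') (t : W) :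
    ((-1 : ℤˣ) ^ (List.count t (ris ω))) = (-1 : ℤˣ) ^ (List.count t (ris ω')) := by
  have h1 : ((ω.map (mu cs)).prod) (t, 1) = ((ω'.map (mu cs)).prod) (t, 1) := by
    rw [← signH_wordProd, ← signH_wordProd, h]
  rw [prod_map_mu, prod_map_mu] at h1
  have := congrArg Prod.snd h1
  simpa using this

lemma simple_mem_rightInvSeq {ω : List B} (hω : cs.IsReduced ω) (i : B)
    (h : ℓ (π ω * s i) < ℓ (π ω)) : s i ∈ ris ω := by
  obtain ⟨ω', hlen, hprod⟩ := cs.exists_reduced_word (π ω * s i)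
  have hred' : cs.IsReduced ω' := hlen
  have hprod2 : π (ω'.concat i) = π ω := by
    rw [cs.wordProd_concat, ← hprod, mul_assoc, cs.simple_mul_simple_self, mul_one]
  have hcount' : List.count (s i) (ris ω') = 0 := by
    rw [List.count_eq_zero]
    intro hmem
    have := cs.isRightInversion_of_mem_rightInvSeq hred' hmem
    obtain ⟨-, hlt⟩ := this
    rw [← hprod] at hlt
    rw [mul_assoc, cs.simple_mul_simple_self, mul_one] at hlt
    omega
  have hconcat := cs.rightInvSeq_concat ω' i
  have hcount2 : List.count (s i) (ris (ω'.concat i)) = 1 := by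
    rw [hconcat, List.concat_eq_append, List.count_append]
    have hz : List.count (s i) (List.map (⇑(MulAut.conj (s i))) (ris ω')) = 0 := by
      rw [List.count_eq_zero]
      intro hmem
      rw [List.mem_map] at hmem
      obtain ⟨t, htmem, ht⟩ := hmem
      have ht' : s i * t * (s i)⁻¹ = s i := by simpa [MulAut.conj_apply] using ht
      have ht'' : t = s i := by
        have h5 := congrArg (fun w => (s i)⁻¹ * w * s i) ht'
        simpa [mul_assoc] using h5
      rw [ht''] at htmem
      exact (List.count_eq_zero.mp hcount') htmem
    rw [hz]
    simp
  have hpar := count_parity cs hprod2.symm (s i)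
  rw [hcount2, pow_one] at hpar
  by_contra hmem
  rw [List.count_eq_zero_of_not_mem hmem, pow_zero] at hpar
  exact absurd hpar (by decide)

lemma exchange {ω : List B} (hω : cs.IsReduced ω) {i : B}
    (h : ℓ (π ω * s i) < ℓ (π ω)) :
    ∃ j < ω.length, π ω * s i = π (ω.eraseIdx j) := by
  have hmem := simple_mem_rightInvSeq cs hω i h
  obtain ⟨j, hj, hjeq⟩ := List.mem_iff_getElem.mp hmem
  rw [cs.length_rightInvSeq] at hj
  refine ⟨j, hj, ?_⟩
  have := cs.wordProd_mul_getD_rightInvSeq ω j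
  rw [List.getD_eq_getElem _ _ (by rw [cs.length_rightInvSeq]; exact hj)] at this
  rw [← this, hjeq]

/-- Any non-reduced word can be shortened by two letters preserving the product,
    with letters among the original ones. -/
lemma shorten {ω : List B} (hω : ¬ cs.IsReduced ω) :
    ∃ ω₂ : List B, (∀ i ∈ ω₂, i ∈ ω) ∧ ω₂.length + 2 = ω.length ∧ π ω₂ = π ω := by
  classical
  have hne : ω.length ≠ 0 := by
    intro h0
    rw [List.length_eq_zero_iff] at h0
    subst h0
    exact hω (by simp [CoxeterSystem.IsReduced])
  have hex : ∃ k, ¬ cs.IsReduced (ω.take (k+1)) := by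
    refine ⟨ω.length - 1, ?_⟩
    have : ω.length - 1 + 1 = ω.length := by omega
    rw [this, List.take_length]
    exact hω
  set j := Nat.find hex with hjdef
  have hj : ¬ cs.IsReduced (ω.take (j+1)) := Nat.find_spec hex
  have hjmin : ∀ k < j, cs.IsReduced (ω.take (k+1)) := fun k hk =>
    not_not.mp (Nat.find_min hex hk)
  have hjred : cs.IsReduced (ω.take j) := by
    rcases Nat.eq_zero_or_pos j with h0 | h0
    · simp [h0, CoxeterSystem.IsReduced]
    · have : j - 1 + 1 = j := by omega
      rw [← this]
      exact hjmin (j-1) (by omega)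
  have hjlt : j < ω.length := by
    have h1 : j ≤ ω.length - 1 := Nat.find_le (by
      have : ω.length - 1 + 1 = ω.length := by omega
      rw [this, List.take_length]
      exact hω)
    omega
  have htake : ω.take (j+1) = ω.take j ++ [ω[j]] := by
    rw [← List.take_concat_get hjlt, List.concat_eq_append]
  have hlen_takej : (ω.take j).length = j := by
    rw [List.length_take]; omega
  have hlttake : ℓ (π (ω.take j) * s (ω[j])) < ℓ (π (ω.take j)) := by
    have h1 : ℓ (π (ω.take j)) = j := by
      have := hjred
      rw [CoxeterSystem.IsReduced] at this
      rw [this, hlen_takej]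
    have h2 : ℓ (π (ω.take (j+1))) ≠ (ω.take (j+1)).length := hj
    have h3 : (ω.take (j+1)).length = j + 1 := by rw [List.length_take]; omega
    have h4 : π (ω.take (j+1)) = π (ω.take j) * s (ω[j]) := by
      rw [htake, cs.wordProd_append, cs.wordProd_singleton]
    rcases cs.length_mul_simple (π (ω.take j)) (ω[j]) with h5 | h5
    · exfalso
      apply h2
      rw [h3, h4, h5, h1]
    · omega
  obtain ⟨k, hk, hkeq⟩ := exchange cs hjred hlttake
  refine ⟨(ω.take j).eraseIdx k ++ ω.drop (j+1), ?_, ?_, ?_⟩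
  · intro i hi
    rcases List.mem_append.mp hi with h | h
    · exact List.mem_of_mem_take (List.mem_of_mem_eraseIdx h)
    · exact List.mem_of_mem_drop h
  · rw [List.length_append, List.length_eraseIdx]
    rw [hlen_takej]
    simp only [if_pos (by omega : k < j)]
    rw [List.length_drop]
    omega
  · rw [cs.wordProd_append, ← hkeq]
    conv_rhs => rw [← List.take_append_drop (j+1) ω]
    rw [cs.wordProd_append, htake, cs.wordProd_append, cs.wordProd_singleton]

/-- Every element of a standard parabolic subgroup has a word in the generating set. -/
lemma exists_K_word (K : Set B) {u : W} (hu : u ∈ Subgroup.closure (cs.simple '' K)) :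
    ∃ ω : List B, (∀ i ∈ ω, i ∈ K) ∧ u = π ω := by
  induction hu using Subgroup.closure_induction with
  | mem w hw =>
    obtain ⟨i, hi, rfl⟩ := hw
    exact ⟨[i], by simpa using hi, by simp⟩
  | one => exact ⟨[], by simp, by simp⟩
  | mul w w' _ _ ihw ihw' =>
    obtain ⟨ω₁, h1, rfl⟩ := ihw
    obtain ⟨ω₂, h2, rfl⟩ := ihw'
    refine ⟨ω₁ ++ ω₂, ?_, by rw [cs.wordProd_append]⟩
    intro i hi
    rcases List.mem_append.mp hi with h | h
    · exact h1 i h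
    · exact h2 i h
  | inv w _ ihw =>
    obtain ⟨ω₁, h1, rfl⟩ := ihw
    refine ⟨ω₁.reverse, fun i hi => h1 i (List.mem_reverse.mp hi), ?_⟩
    rw [cs.wordProd_reverse]

/-- Every element of a standard parabolic subgroup has a *reduced* word in the generators. -/
lemma exists_reduced_K_word (K : Set B) {u : W} (hu : u ∈ Subgroup.closure (cs.simple '' K)) :
    ∃ ω : List B, (∀ i ∈ ω, i ∈ K) ∧ cs.IsReduced ω ∧ u = π ω := by
  obtain ⟨ω, hK, rfl⟩ := exists_K_word cs K hu
  clear hu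
  suffices H : ∀ n (ω : List B), ω.length = n → (∀ i ∈ ω, i ∈ K) →
      ∃ ω' : List B, (∀ i ∈ ω', i ∈ K) ∧ cs.IsReduced ω' ∧ π ω = π ω' by
    exact H ω.length ω rfl hK
  intro n
  induction n using Nat.strong_induction_on with
  | _ n ih =>
    intro ω hlen hK
    by_cases hred : cs.IsReduced ω
    · exact ⟨ω, hK, hred, rfl⟩
    · obtain ⟨ω₂, hmem, hlen2, hprod⟩ := shorten cs hred
      obtain ⟨ω₃, h3, h4, h5⟩ := ih ω₂.length (by omega) ω₂ rfl
        (fun i hi => hK i (hmem i hi))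
      exact ⟨ω₃, h3, h4, by rw [← hprod, h5]⟩

lemma wordProd_mem_closure (K : Set B) {ω : List B} (hK : ∀ i ∈ ω, i ∈ K) :
    π ω ∈ Subgroup.closure (cs.simple '' K) := by
  induction ω with
  | nil =>
    rw [cs.wordProd_nil]
    exact one_mem _
  | cons i ω ih =>
    rw [cs.wordProd_cons]
    exact mul_mem (Subgroup.subset_closure ⟨i, hK i (by simp), rfl⟩)
      (ih (fun i hi => hK i (by simp [hi])))

/-- Deodhar's lemma: lengths add for minimal coset representatives. -/
lemma deodhar (K : Set B) {x : W} (hx : ∀ v ∈ Subgroup.closure (cs.simple '' K), ℓ x ≤ ℓ (x * v))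
    {u : W} (hu : u ∈ Subgroup.closure (cs.simple '' K)) :
    ℓ (x * u) = ℓ x + ℓ u := by
  obtain ⟨ω, hK, hred, rfl⟩ := exists_reduced_K_word cs K hu
  clear hu
  suffices H : ∀ n (ω : List B), ω.length = n → (∀ i ∈ ω, i ∈ K) → cs.IsReduced ω →
      ℓ (x * π ω) = ℓ x + ℓ (π ω) by
    exact H ω.length ω rfl hK hred
  intro n
  induction n using Nat.strong_induction_on with
  | _ n ih =>
    intro ω hlen hK hred
    rcases List.eq_nil_or_concat ω with rfl | ⟨ω₀, i, rfl⟩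
    · simp
    · have hK0 : ∀ j ∈ ω₀, j ∈ K := fun j hj => hK j (by simp [hj])
      have hred0 : cs.IsReduced ω₀ := by
        have := hred.take ω₀.length
        rwa [List.concat_eq_append, List.take_left] at this
      have hlen0' : ℓ (π ω₀) = ω₀.length := hred0
      have hredeq : ℓ (π (ω₀.concat i)) = ω₀.length + 1 := by
        have h9 : ℓ (π (ω₀.concat i)) = (ω₀.concat i).length := hred
        rw [h9, List.length_concat]
      have hIH : ℓ (x * π ω₀) = ℓ x + ℓ (π ω₀) :=
        ih ω₀.length (by rw [← hlen, List.length_concat]; omega) ω₀ rfl hK0 hred0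
      rw [cs.wordProd_concat, ← mul_assoc]
      rcases cs.length_mul_simple (x * π ω₀) i with h5 | h5
      · rw [h5, hIH, ← cs.wordProd_concat, hredeq, hlen0']
        omega
      · -- contradiction via exchange
        exfalso
        obtain ⟨α, hαlen, hαprod⟩ := cs.exists_reduced_word x
        have hredα : cs.IsReduced α := hαlen
        have hαl : ℓ x = α.length := by rw [hαprod]; exact hαlen
        have hredcat : cs.IsReduced (α ++ ω₀) := by
          rw [CoxeterSystem.IsReduced, cs.wordProd_append, List.length_append, ← hαprod, hIH,
            hαl, hlen0']
        have hltcat : ℓ (π (α ++ ω₀) * s i) < ℓ (π (α ++ ω₀)) := by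
          rw [cs.wordProd_append, ← hαprod]
          omega
        obtain ⟨j, hj, hjeq⟩ := exchange cs hredcat hltcat
        rw [cs.wordProd_append, ← hαprod] at hjeq
        rcases Nat.lt_or_ge j α.length with hcase | hcase
        · -- deletion in the x-part: contradicts minimality of x
          rw [List.eraseIdx_append_of_lt_length hcase, cs.wordProd_append] at hjeq
          have hin : π ω₀ * s i * (π ω₀)⁻¹ ∈ Subgroup.closure (cs.simple '' K) := by
            refine mul_mem (mul_mem (wordProd_mem_closure cs K hK0)
              (Subgroup.subset_closure ⟨i, hK i (by simp), rfl⟩)) ?_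
            exact inv_mem (wordProd_mem_closure cs K hK0)
          have hxle := hx _ hin
          have hxw : x * (π ω₀ * s i * (π ω₀)⁻¹) = π (α.eraseIdx j) * π ω₀ * (π ω₀)⁻¹ := by
            rw [← hjeq]; group
          rw [hxw, mul_inv_cancel_right] at hxle
          have hle2 : ℓ (π (α.eraseIdx j)) ≤ (α.eraseIdx j).length := cs.length_wordProd_le _
          rw [List.length_eraseIdx, if_pos hcase] at hle2
          omega
        · -- deletion in the ω₀-part: contradicts reducedness of ω₀.concat i
          rw [List.eraseIdx_append_of_length_le hcase, cs.wordProd_append, ← hαprod] at hjeq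
          have hcancel : π ω₀ * s i = π (ω₀.eraseIdx (j - α.length)) :=
            mul_left_cancel (a := x) (by rw [← mul_assoc]; exact hjeq)
          have h6 : ℓ (π ω₀ * s i) ≤ (ω₀.eraseIdx (j - α.length)).length := by
            rw [hcancel]; exact cs.length_wordProd_le _
          have h7 : (ω₀.eraseIdx (j - α.length)).length ≤ ω₀.length := by
            rw [List.length_eraseIdx]
            split <;> omega
          have h8 : ℓ (π ω₀ * s i) = ω₀.length + 1 := by
            rw [← cs.wordProd_concat, hredeq]
          omega

end KLaux


/-- Let `𝔎` be a field and `W` a finite Coxeter group with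
Kazhdan–Lusztig basis elements `C_w = Σ_{y ≤ w} (−1)^{ℓ(w)−ℓ(y)} p_{y,w}(1) · y ∈ 𝔎W`
(here `blt` is the strict Bruhat order, `p` the Kazhdan–Lusztig polynomials, with
`p_{w,w} = 1`, and we use the fact `u · C_{w_K} = (−1)^{ℓ(u)} C_{w_K}` for `u ∈ W_K`).
For `K ⊆ S`, the elements `x · C_{w_K}` with `x ∈ X_K` (minimal-length left coset
representatives of `W_K`) form a `𝔎`-basis of the left ideal `𝔎W · C_{w_K}`. -/
theorem KL_basis_xC {𝔎 B W : Type*} [Field 𝔎] [Group W] [Fintype W] [DecidableEq W]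
    {M : CoxeterMatrix B} (cs : CoxeterSystem M W)
    (blt : W → W → Prop) [DecidableRel blt]
    (hblt : ∀ y w : W, blt y w → cs.length y < cs.length w)
    (p : W → W → Polynomial ℤ) (hp : ∀ w : W, p w w = 1)
    (C : W → MonoidAlgebra 𝔎 W)
    (hC : ∀ w : W, C w = ∑ y : W,
      (if y = w ∨ blt y w then
        (((-1 : ℤ) ^ (cs.length w - cs.length y) * (p y w).eval 1 : ℤ) : 𝔎) else 0) •
        MonoidAlgebra.of 𝔎 W y)
    (K : Set B)
    (wK : W) (hwKmem : wK ∈ Subgroup.closure (cs.simple '' K))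
    (hwKlong : ∀ u ∈ Subgroup.closure (cs.simple '' K), cs.length u ≤ cs.length wK)
    (hanti : ∀ u ∈ Subgroup.closure (cs.simple '' K),
      MonoidAlgebra.of 𝔎 W u * C wK = ((-1 : 𝔎) ^ cs.length u) • C wK) :
    LinearIndependent 𝔎
      (fun x : {x : W // ∀ u ∈ Subgroup.closure (cs.simple '' K),
          cs.length x ≤ cs.length (x * u)} =>
        MonoidAlgebra.of 𝔎 W (x : W) * C wK) ∧
    Submodule.span 𝔎
      (Set.range (fun x : {x : W // ∀ u ∈ Subgroup.closure (cs.simple '' K),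
          cs.length x ≤ cs.length (x * u)} =>
        MonoidAlgebra.of 𝔎 W (x : W) * C wK)) =
    Submodule.span 𝔎 {a : MonoidAlgebra 𝔎 W | ∃ h : W, a = MonoidAlgebra.of 𝔎 W h * C wK} := by
  set WK := Subgroup.closure (cs.simple '' K) with hWK
  set X := {x : W // ∀ u ∈ WK, cs.length x ≤ cs.length (x * u)} with hX
  set f : X → MonoidAlgebra 𝔎 W := fun x => MonoidAlgebra.of 𝔎 W (x : W) * C wK with hf
  -- the coefficient function of C wK
  set c : W → 𝔎 := fun y => if y = wK ∨ blt y wK then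
      (((-1 : ℤ) ^ (cs.length wK - cs.length y) * (p y wK).eval 1 : ℤ) : 𝔎) else 0 with hc
  have hCco : ∀ g : W, (C wK).coeff g = c g := by
    intro g
    rw [hC wK]
    rw [MonoidAlgebra.coeff_sum, Finset.sum_apply']
    rw [Finset.sum_eq_single g]
    · rw [MonoidAlgebra.coeff_smul_apply, MonoidAlgebra.of_apply, MonoidAlgebra.coeff_single, Finsupp.single_apply, if_pos rfl,
        smul_eq_mul, mul_one]
    · intro y _ hy
      rw [MonoidAlgebra.coeff_smul_apply, MonoidAlgebra.of_apply, MonoidAlgebra.coeff_single, Finsupp.single_apply, if_neg hy,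
        smul_eq_mul, mul_zero]
    · intro hg
      exact absurd (Finset.mem_univ g) hg
  have hcwK : c wK = 1 := by
    rw [hc]
    simp only [if_pos (Or.inl rfl), Nat.sub_self, pow_zero, hp wK, one_mul, Polynomial.eval_one]
    norm_num
  have hsupp : ∀ g : W, c g ≠ 0 → g = wK ∨ cs.length g < cs.length wK := by
    intro g hg
    rw [hc] at hg
    by_cases hcond : g = wK ∨ blt g wK
    · rcases hcond with h | h
      · exact Or.inl h
      · exact Or.inr (hblt g wK h)
    · exact absurd (if_neg hcond) hg
  have hmulco : ∀ (x g : W), (MonoidAlgebra.of 𝔎 W x * C wK).coeff g = c (x⁻¹ * g) := by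
    intro x g
    rw [MonoidAlgebra.of_apply, MonoidAlgebra.coeff_single_mul_apply, one_mul, hCco]
  constructor
  · -- linear independence
    rw [linearIndependent_iff]
    intro l hl
    by_contra hne
    obtain ⟨x₀, hx₀mem, hx₀max⟩ := Finset.exists_max_image l.support
      (fun x : X => cs.length (x : W))
      (Finsupp.support_nonempty_iff.mpr hne)
    have heval : (Finsupp.linearCombination 𝔎 f l).coeff ((x₀ : W) * wK) = 0 := by rw [hl]; rfl
    rw [Finsupp.linearCombination_apply, Finsupp.sum, MonoidAlgebra.coeff_sum, Finset.sum_apply'] at heval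
    rw [Finset.sum_eq_single x₀] at heval
    · rw [MonoidAlgebra.coeff_smul_apply, hf, hmulco, inv_mul_cancel_left, hcwK, smul_eq_mul, mul_one] at heval
      exact (Finsupp.mem_support_iff.mp hx₀mem) heval
    · intro x hxmem hxne
      rw [MonoidAlgebra.coeff_smul_apply, hf, hmulco, smul_eq_mul]
      have hz : c ((x : W)⁻¹ * ((x₀ : W) * wK)) = 0 := by
        by_contra hzz
        rcases hsupp _ hzz with h | h
        · -- z = wK forces x = x₀
          apply hxne
          have : (x : W) = (x₀ : W) := by
            have h2 := congrArg (fun w => (x : W) * w * wK⁻¹) h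
            simpa [mul_assoc] using h2.symm
          exact Subtype.ext this
        · -- length contradiction
          have hd : cs.length ((x₀ : W) * wK) = cs.length (x₀ : W) + cs.length wK :=
            KLaux.deodhar cs K x₀.2 hwKmem
          have htri : cs.length ((x : W) * ((x : W)⁻¹ * ((x₀ : W) * wK))) ≤
              cs.length (x : W) + cs.length ((x : W)⁻¹ * ((x₀ : W) * wK)) :=
            cs.length_mul_le _ _
          rw [mul_inv_cancel_left] at htri
          have hle : cs.length (x : W) ≤ cs.length (x₀ : W) := hx₀max x hxmem
          omega
      rw [hz, mul_zero]
    · intro h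
      exact absurd hx₀mem h
  · -- spans agree
    apply le_antisymm
    · apply Submodule.span_mono
      rintro _ ⟨x, rfl⟩
      exact ⟨(x : W), rfl⟩
    · rw [Submodule.span_le]
      rintro _ ⟨h, rfl⟩
      have hfin : (Set.Finite {v : W | h⁻¹ * v ∈ WK}) := Set.toFinite _
      have hne : ({v : W | h⁻¹ * v ∈ WK}).Nonempty := ⟨h, by
        show h⁻¹ * h ∈ WK
        rw [inv_mul_cancel]
        exact one_mem _⟩
      obtain ⟨x, hxT, hxmin⟩ := Set.exists_min_image _ (fun v => cs.length v) hfin hne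
      have hxX : ∀ u ∈ WK, cs.length x ≤ cs.length (x * u) := by
        intro u hu
        apply hxmin
        show h⁻¹ * (x * u) ∈ WK
        rw [← mul_assoc]
        exact mul_mem hxT hu
      have hu0 : h⁻¹ * x ∈ WK := hxT
      have hinv : (h⁻¹ * x)⁻¹ ∈ WK := inv_mem hu0
      have hdecomp : h = x * (h⁻¹ * x)⁻¹ := by group
      have : MonoidAlgebra.of 𝔎 W h * C wK =
          ((-1 : 𝔎) ^ cs.length ((h⁻¹ * x)⁻¹)) • (MonoidAlgebra.of 𝔎 W x * C wK) := by
        conv_lhs => rw [hdecomp]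
        rw [map_mul, mul_assoc, hanti _ hinv, mul_smul_comm]
      rw [this]
      exact Submodule.smul_mem _ _ (Submodule.subset_span ⟨⟨x, hxX⟩, rfl⟩)
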